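/- Let d ≥ 2, let {𝒫^(b)}_{b=1}^{d+1} be a set of d+1 mutually unbiased measurements on ℂ^d with efficiency parameter κ, and let ρ be a density operator on ℂ^d. Then (1/(d+1)) Σ_{b=1}^{d+1} H(𝒫^(b)|ρ) ≥ log₂((d+1)/(κ+1)). -/

import Mathlib

open Matrix Finset Real
open scoped ComplexOrder

lemma aux_trace_nonneg {m : Type*} [Fintype m] [DecidableEq m] {A : Matrix m m ℂ}
    (hA : A.PosSemidef) : 0 ≤ A.trace := by
  obtain ⟨B, rfl⟩ := (show ∃ B : Matrix m m ℂ, A = Bᴴ * B by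
    open scoped MatrixOrder in exact CStarAlgebra.nonneg_iff_eq_star_mul_self.mp hA.nonneg)
  rw [Matrix.trace]
  refine Finset.sum_nonneg fun i _ => ?_
  rw [Matrix.diag_apply, Matrix.mul_apply]
  refine Finset.sum_nonneg fun j _ => ?_
  simpa [Matrix.conjTranspose_apply] using star_mul_self_nonneg (B j i)

lemma aux_trace_mul_nonneg {m : Type*} [Fintype m] [DecidableEq m] {A B : Matrix m m ℂ}
    (hA : A.PosSemidef) (hB : B.PosSemidef) : 0 ≤ (A * B).trace := by
  obtain ⟨C, rfl⟩ := (show ∃ C : Matrix m m ℂ, B = Cᴴ * C by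
    open scoped MatrixOrder in exact CStarAlgebra.nonneg_iff_eq_star_mul_self.mp hB.nonneg)
  rw [show A * (Cᴴ * C) = (A * Cᴴ) * C by rw [Matrix.mul_assoc],
    Matrix.trace_mul_comm, ← Matrix.mul_assoc]
  exact aux_trace_nonneg (hA.mul_mul_conjTranspose_same C)

lemma aux_trace_sq {m : Type*} [Fintype m] [DecidableEq m] {A : Matrix m m ℂ}
    (hA : A.IsHermitian) :
    (A * A).trace = ((∑ i, hA.eigenvalues i ^ 2 : ℝ) : ℂ) := by
  set U : Matrix m m ℂ := (hA.eigenvectorUnitary : Matrix m m ℂ) with hU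
  set D : Matrix m m ℂ := diagonal (RCLike.ofReal ∘ hA.eigenvalues) with hD
  have hsU : star U * U = 1 := mem_unitaryGroup_iff'.mp (hA.eigenvectorUnitary).2
  have h1 : A * A = U * (D * D) * star U := by
    conv_lhs => rw [hA.spectral_theorem, Unitary.conjStarAlgAut_apply]
    rw [← hU, ← hD]
    rw [show U * D * star U * (U * D * star U) = U * D * (star U * U) * D * star U by
      noncomm_ring]
    rw [hsU, mul_one]
    noncomm_ring
  rw [h1, trace_mul_cycle, ← Matrix.mul_assoc, hsU, one_mul, hD,
    diagonal_mul_diagonal, trace_diagonal]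
  push_cast
  ring_nf
  simp [pow_two]

lemma aux_trace_eq_sum {m : Type*} [Fintype m] [DecidableEq m] {A : Matrix m m ℂ}
    (hA : A.IsHermitian) :
    A.trace = ((∑ i, hA.eigenvalues i : ℝ) : ℂ) := by
  set U : Matrix m m ℂ := (hA.eigenvectorUnitary : Matrix m m ℂ) with hU
  set D : Matrix m m ℂ := diagonal (RCLike.ofReal ∘ hA.eigenvalues) with hD
  have hsU : star U * U = 1 := mem_unitaryGroup_iff'.mp (hA.eigenvectorUnitary).2
  conv_lhs => rw [hA.spectral_theorem, Unitary.conjStarAlgAut_apply]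
  rw [← hU, ← hD, trace_mul_cycle, hsU, one_mul, hD, trace_diagonal]
  push_cast
  rfl

lemma aux_quad {m : Type*} [Fintype m] [DecidableEq m] (q : m → ℝ) (α β : ℝ) :
    ∑ n, ∑ n', q n * q n' * (if n = n' then α else β)
      = (α - β) * (∑ n, q n ^ 2) + β * (∑ n, q n) ^ 2 := by
  have h : ∀ n n' : m, q n * q n' * (if n = n' then α else β)
      = (if n = n' then (α - β) * (q n * q n) else 0) + β * (q n * q n') := by
    intro n n'
    by_cases hnn : n = n'
    · subst hnn; simp; ring
    · simp [hnn]; ring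
  simp_rw [h, Finset.sum_add_distrib, Finset.sum_ite_eq, Finset.mem_univ, if_true]
  have e1 : ∑ n, (α - β) * (q n * q n) = (α - β) * ∑ n, q n ^ 2 := by
    rw [Finset.mul_sum]; exact Finset.sum_congr rfl fun n _ => by ring
  have e2 : ∑ n, ∑ n', β * (q n * q n') = β * (∑ n, q n) ^ 2 := by
    rw [sq, Finset.sum_mul_sum, Finset.mul_sum]
    exact Finset.sum_congr rfl fun n _ => by
      rw [Finset.mul_sum]
  rw [e1, e2]

set_option maxHeartbeats 2000000 in
theorem stmt2 (d : ℕ) (hd : 2 ≤ d) (κ : ℝ)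
    (hκ1 : 1 / (d : ℝ) < κ) (hκ2 : κ ≤ 1)
    (P : Fin (d + 1) → Fin d → Matrix (Fin d) (Fin d) ℂ)
    (hpsd : ∀ b n, (P b n).PosSemidef)
    (hsum : ∀ b, ∑ n, P b n = 1)
    (htr1 : ∀ b n, (P b n).trace = 1)
    (htr2 : ∀ b b', b ≠ b' → ∀ n n', (P b n * P b' n').trace = ((1 / (d : ℝ) : ℝ) : ℂ))
    (htr3 : ∀ b n n', (P b n * P b n').trace =
      if n = n' then ((κ : ℝ) : ℂ) else (((1 - κ) / ((d : ℝ) - 1) : ℝ) : ℂ))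
    (ρ : Matrix (Fin d) (Fin d) ℂ) (hρ : ρ.PosSemidef) (hρtr : ρ.trace = 1)
    (p : Fin (d + 1) → Fin d → ℝ)
    (hp : ∀ b n, ((p b n : ℝ) : ℂ) = (P b n * ρ).trace) :
    (1 / ((d : ℝ) + 1)) * (∑ b, (-∑ n, p b n * Real.logb 2 (p b n))) ≥
      Real.logb 2 (((d : ℝ) + 1) / (κ + 1)) := by
  classical
  -- numeric preliminaries
  have hdR : (2:ℝ) ≤ (d:ℝ) := by exact_mod_cast hd
  have hd0 : (0:ℝ) < (d:ℝ) := by linarith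
  have hdne : ((d:ℝ)) ≠ 0 := ne_of_gt hd0
  have hdm1 : (0:ℝ) < (d:ℝ) - 1 := by linarith
  have hdCne : ((d:ℕ) : ℂ) ≠ 0 := by exact_mod_cast (by omega : d ≠ 0)
  have hκ0 : 0 < κ := lt_trans (by positivity) hκ1
  set δ : ℝ := 1 / (d:ℝ) with hδdef
  have hδpos : 0 < δ := by positivity
  set q : Fin (d+1) → Fin d → ℝ := fun b n => p b n - δ with hqdef
  -- probabilities
  have hpnn : ∀ b n, 0 ≤ p b n := by
    intro b n
    have h := aux_trace_mul_nonneg (hpsd b n) hρ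
    rw [← hp] at h
    exact_mod_cast h
  have hsump : ∀ b, ∑ n, p b n = 1 := by
    intro b
    have h1 : ((∑ n, p b n : ℝ) : ℂ) = 1 := by
      push_cast
      simp_rw [hp]
      rw [← trace_sum, ← Finset.sum_mul, hsum b, one_mul, hρtr]
    exact_mod_cast h1
  have hqsum : ∀ b, ∑ n, q b n = 0 := by
    intro b
    simp only [hqdef, Finset.sum_sub_distrib, hsump b, Finset.sum_const, Finset.card_univ,
      Fintype.card_fin, nsmul_eq_mul, hδdef]
    field_simp
    ring
  -- matrices
  set E : Fin (d+1) → Fin d → Matrix (Fin d) (Fin d) ℂ :=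
    fun b n => P b n - ((δ:ℝ):ℂ) • 1 with hEdef
  set σm : Matrix (Fin d) (Fin d) ℂ := ρ - ((δ:ℝ):ℂ) • 1 with hσdef
  have htrone : (1 : Matrix (Fin d) (Fin d) ℂ).trace = ((d:ℕ):ℂ) := by
    simp [Matrix.trace_one]
  have hδd : ((δ:ℝ):ℂ) * ((δ:ℝ):ℂ) * ((d:ℕ):ℂ) = ((δ:ℝ):ℂ) := by
    simp only [hδdef]
    push_cast
    field_simp
  have htrEE : ∀ b n b' n', (E b n * E b' n').trace
      = (P b n * P b' n').trace - ((δ:ℝ):ℂ) := by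
    intro b n b' n'
    simp only [hEdef, sub_mul, mul_sub, Matrix.smul_mul, Matrix.mul_smul, one_mul, mul_one,
      smul_smul, trace_sub, trace_smul, htr1, htrone, smul_eq_mul, mul_one]
    linear_combination hδd
  have htrEσ : ∀ b n, (E b n * σm).trace = ((q b n : ℝ) : ℂ) := by
    intro b n
    simp only [hEdef, hσdef, sub_mul, mul_sub, Matrix.smul_mul, Matrix.mul_smul, one_mul,
      mul_one, smul_smul, trace_sub, trace_smul, htr1, htrone, hρtr, smul_eq_mul, mul_one,
      ← hp, hqdef]
    push_cast
    linear_combination hδd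
  set Q : ℝ := ∑ b, ∑ n, q b n ^ 2 with hQdef
  set aa : ℝ := κ - (1 - κ) / ((d:ℝ) - 1) with haadef
  set T : Matrix (Fin d) (Fin d) ℂ := ∑ b, ∑ n, ((q b n : ℝ):ℂ) • E b n with hTdef
  have hTσ : (T * σm).trace = ((Q:ℝ):ℂ) := by
    simp only [hTdef, Finset.sum_mul, trace_sum, Matrix.smul_mul, trace_smul, htrEσ,
      smul_eq_mul, hQdef]
    push_cast
    exact Finset.sum_congr rfl fun b _ => Finset.sum_congr rfl fun n _ => by ring
  have hσT : (σm * T).trace = ((Q:ℝ):ℂ) := by rw [Matrix.trace_mul_comm, hTσ]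
  have hTT : (T * T).trace = ((aa * Q : ℝ):ℂ) := by
    have expand : (T * T).trace
        = ∑ b, ∑ n, ∑ b', ∑ n', ((q b n : ℝ):ℂ) * ((q b' n' : ℝ):ℂ) * (E b n * E b' n').trace := by
      simp only [hTdef, Finset.sum_mul, Finset.mul_sum, Matrix.smul_mul, Matrix.mul_smul,
        trace_sum, trace_smul, smul_eq_mul]
      exact Finset.sum_congr rfl fun b _ => Finset.sum_congr rfl fun n _ =>
        Finset.sum_congr rfl fun b' _ => Finset.sum_congr rfl fun n' _ => by
          rw [Matrix.trace_mul_comm]; ring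
    have expand2 : (T * T).trace
        = ∑ b, ∑ b', ∑ n, ∑ n', ((q b n : ℝ):ℂ) * ((q b' n' : ℝ):ℂ) * (E b n * E b' n').trace := by
      rw [expand]
      exact Finset.sum_congr rfl fun b _ => Finset.sum_comm
    have hoff : ∀ b b', b ≠ b' →
        (∑ n, ∑ n', ((q b n : ℝ):ℂ) * ((q b' n' : ℝ):ℂ) * (E b n * E b' n').trace) = 0 := by
      intro b b' hbb
      have : ∀ (n n' : Fin d), (E b n * E b' n').trace = 0 := by
        intro n n'
        rw [htrEE, htr2 b b' hbb]
        simp [hδdef]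
      simp [this]
    have hdiag : ∀ b,
        (∑ n, ∑ n', ((q b n : ℝ):ℂ) * ((q b n' : ℝ):ℂ) * (E b n * E b n').trace)
          = ((aa * ∑ n, q b n ^ 2 : ℝ):ℂ) := by
      intro b
      have hv : ∀ n n', (E b n * E b n').trace
          = ((if n = n' then κ - δ else (1 - κ)/((d:ℝ)-1) - δ : ℝ) : ℂ) := by
        intro n n'
        rw [htrEE, htr3]
        split <;> push_cast <;> ring
      simp_rw [hv]
      have har := aux_quad (q b) (κ - δ) ((1 - κ)/((d:ℝ)-1) - δ)
      rw [hqsum b] at har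
      have : (∑ n, ∑ n', q b n * q b n' * (if n = n' then κ - δ else (1 - κ)/((d:ℝ)-1) - δ))
          = aa * ∑ n, q b n ^ 2 := by
        rw [har, haadef]; ring
      rw [← this]
      push_cast [apply_ite (fun x : ℝ => (x : ℂ))]
      rfl
    rw [expand2]
    have : ∀ b, (∑ b', ∑ n, ∑ n', ((q b n : ℝ):ℂ) * ((q b' n' : ℝ):ℂ) * (E b n * E b' n').trace)
        = ((aa * ∑ n, q b n ^ 2 : ℝ):ℂ) := by
      intro b
      rw [Finset.sum_eq_single b]
      · exact hdiag b
      · intro b' _ hbb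
        exact hoff b b' (Ne.symm hbb)
      · intro h; exact absurd (Finset.mem_univ b) h
    simp_rw [this]
    push_cast [hQdef]
    rw [Finset.mul_sum]
  -- trace of σm * σm
  set evs : ℝ := ∑ i, hρ.1.eigenvalues i ^ 2 with hevs
  have hσσ : (σm * σm).trace = ((evs - δ : ℝ):ℂ) := by
    simp only [hσdef, sub_mul, mul_sub, Matrix.smul_mul, Matrix.mul_smul, one_mul, mul_one,
      smul_smul, trace_sub, trace_smul, hρtr, htrone, smul_eq_mul, mul_one,
      aux_trace_sq hρ.1, ← hevs]
    push_cast
    linear_combination hδd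
  -- hermitian X
  set X : Matrix (Fin d) (Fin d) ℂ := T - ((aa:ℝ):ℂ) • σm with hXdef
  have hEH : ∀ b n, (E b n)ᴴ = E b n := by
    intro b n
    simp [hEdef, Matrix.conjTranspose_sub, Matrix.conjTranspose_smul, Complex.star_def,
      Complex.conj_ofReal, Matrix.conjTranspose_one, (hpsd b n).1.eq]
  have hTH : Tᴴ = T := by
    simp only [hTdef, Matrix.conjTranspose_sum, Matrix.conjTranspose_smul, Complex.star_def,
      Complex.conj_ofReal]
    exact Finset.sum_congr rfl fun b _ => Finset.sum_congr rfl fun n _ => by rw [hEH]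
  have hσH : σmᴴ = σm := by
    simp [hσdef, Matrix.conjTranspose_sub, Matrix.conjTranspose_smul, Complex.star_def,
      Complex.conj_ofReal, Matrix.conjTranspose_one, hρ.1.eq]
  have hXH : Xᴴ = X := by
    simp only [hXdef, Matrix.conjTranspose_sub, Matrix.conjTranspose_smul, Complex.star_def,
      Complex.conj_ofReal, hTH, hσH]
  have hXpos : 0 ≤ (X * X).trace := by
    have : X * X = Xᴴ * X := by rw [hXH]
    rw [this]
    exact aux_trace_nonneg (posSemidef_conjTranspose_mul_self X)
  have hXX : (X * X).trace = ((aa * aa * (evs - δ) - aa * Q - aa * Q + aa * Q : ℝ):ℂ) := by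
    simp only [hXdef, sub_mul, mul_sub, Matrix.smul_mul, Matrix.mul_smul, smul_smul,
      trace_sub, trace_smul, hTT, hTσ, hσT, hσσ, smul_eq_mul]
    push_cast
    ring
  -- real inequality
  have hkey : 0 ≤ aa * aa * (evs - δ) - aa * Q := by
    rw [hXX] at hXpos
    have : (0:ℝ) ≤ aa * aa * (evs - δ) - aa * Q - aa * Q + aa * Q := by exact_mod_cast hXpos
    linarith
  have haapos : 0 < aa := by
    have h1 : 1 < κ * (d:ℝ) := by
      rw [hδdef] at hκ1
      calc (1:ℝ) = (1/(d:ℝ)) * d := by field_simp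
      _ < κ * d := by exact mul_lt_mul_of_pos_right hκ1 hd0
    have : aa = (κ * (d:ℝ) - 1) / ((d:ℝ) - 1) := by
      rw [haadef]; field_simp; ring
    rw [this]
    apply div_pos <;> linarith
  have hevs1 : evs ≤ 1 := by
    have hsum_eig : ∑ i, hρ.1.eigenvalues i = 1 := by
      have h := aux_trace_eq_sum hρ.1
      rw [hρtr] at h
      exact_mod_cast h.symm
    have h2 := Finset.sum_sq_le_sq_sum_of_nonneg
      (s := Finset.univ) (f := fun i => hρ.1.eigenvalues i)
      (fun i _ => hρ.eigenvalues_nonneg i)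
    rw [hsum_eig] at h2
    simpa [hevs] using h2
  have hQle : Q ≤ κ - δ := by
    have h1 : aa * Q ≤ aa * (aa * (evs - δ)) := by nlinarith
    have h2 : Q ≤ aa * (evs - δ) := le_of_mul_le_mul_left (by linarith [h1]) haapos
    have h3 : aa * (evs - δ) ≤ aa * (1 - δ) := by
      apply mul_le_mul_of_nonneg_left _ (le_of_lt haapos)
      linarith
    have h4 : aa * (1 - δ) = κ - δ := by
      rw [haadef, hδdef]; field_simp; ring
    linarith
  -- index of coincidence
  set S : ℝ := ∑ b, ∑ n, p b n ^ 2 with hSdef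
  have hddelta : (d:ℝ) * δ ^ 2 = δ := by rw [hδdef]; field_simp
  have hSb : ∀ b, ∑ n, p b n ^ 2 = (∑ n, q b n ^ 2) + δ := by
    intro b
    have hterm : ∀ n, p b n ^ 2 = q b n ^ 2 + 2 * δ * q b n + δ ^ 2 := by
      intro n; simp only [hqdef]; ring
    simp_rw [hterm]
    rw [Finset.sum_add_distrib, Finset.sum_add_distrib, ← Finset.mul_sum, hqsum b]
    simp [Finset.card_univ, hddelta]
  have hSQ : S = Q + ((d:ℝ) + 1) * δ := by
    rw [hSdef, hQdef]
    simp_rw [hSb]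
    rw [Finset.sum_add_distrib, Finset.sum_const, Finset.card_univ, Fintype.card_fin]
    push_cast
    ring
  have hdone : ((d:ℝ) + 1) * δ = 1 + δ := by rw [hδdef]; field_simp
  have hSle : S ≤ κ + 1 := by rw [hSQ, hdone]; linarith
  have hQnn : 0 ≤ Q := by
    rw [hQdef]
    exact Finset.sum_nonneg fun b _ => Finset.sum_nonneg fun n _ => sq_nonneg _
  have hSpos : 0 < S := by rw [hSQ, hdone]; linarith
  -- Jensen
  set t : Finset (Fin (d+1) × Fin d) :=
    Finset.univ.filter (fun x => p x.1 x.2 ≠ 0) with htdef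
  have htot : ∑ x : Fin (d+1) × Fin d, p x.1 x.2 = (d:ℝ) + 1 := by
    rw [Fintype.sum_prod_type]
    simp_rw [hsump]
    simp [Finset.card_univ]
  have hw1 : ∑ x ∈ t, p x.1 x.2 / ((d:ℝ) + 1) = 1 := by
    rw [← Finset.sum_div, htdef, Finset.sum_filter_of_ne (fun x _ h => h), htot]
    field_simp
  have hjensen := (strictConcaveOn_log_Ioi.concaveOn).le_map_sum
    (t := t) (w := fun x => p x.1 x.2 / ((d:ℝ) + 1)) (p := fun x => p x.1 x.2)
    (fun x _ => div_nonneg (hpnn x.1 x.2) (by positivity))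
    hw1
    (fun x hx => by
      rw [htdef, Finset.mem_filter] at hx
      exact lt_of_le_of_ne (hpnn x.1 x.2) (Ne.symm hx.2))
  simp only [smul_eq_mul] at hjensen
  have hrhs : ∑ x ∈ t, p x.1 x.2 / ((d:ℝ) + 1) * p x.1 x.2 = S / ((d:ℝ) + 1) := by
    have : ∀ x : Fin (d+1) × Fin d, p x.1 x.2 / ((d:ℝ) + 1) * p x.1 x.2
        = (p x.1 x.2 ^ 2) / ((d:ℝ) + 1) := fun x => by ring
    simp_rw [this]
    rw [← Finset.sum_div, htdef, Finset.sum_filter_of_ne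
      (s := Finset.univ) (p := fun x : Fin (d+1) × Fin d => p x.1 x.2 ≠ 0)
      (f := fun x : Fin (d+1) × Fin d => p x.1 x.2 ^ 2)
      (fun x _ h hx => h (by simp [hx]))]
    congr 1
    rw [hSdef, Fintype.sum_prod_type]
  set L : ℝ := ∑ x : Fin (d+1) × Fin d, p x.1 x.2 * Real.log (p x.1 x.2) with hLdef
  have hlhs : ∑ x ∈ t, p x.1 x.2 / ((d:ℝ) + 1) * Real.log (p x.1 x.2) = L / ((d:ℝ) + 1) := by
    have e : ∀ x : Fin (d+1) × Fin d, p x.1 x.2 / ((d:ℝ)+1) * Real.log (p x.1 x.2)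
        = (p x.1 x.2 * Real.log (p x.1 x.2)) / ((d:ℝ)+1) := fun x => by ring
    simp_rw [e]
    rw [← Finset.sum_div, htdef, Finset.sum_filter_of_ne
      (s := Finset.univ) (p := fun x : Fin (d+1) × Fin d => p x.1 x.2 ≠ 0)
      (f := fun x : Fin (d+1) × Fin d => p x.1 x.2 * Real.log (p x.1 x.2))
      (fun x _ h hx => h (by simp [hx])), hLdef]
  rw [hlhs, hrhs] at hjensen
  have hlog2 : 0 < Real.log 2 := Real.log_pos (by norm_num)
  have hfrac : S/((d:ℝ)+1) ≤ (κ+1)/((d:ℝ)+1) := (div_le_div_iff_of_pos_right (by positivity)).mpr hSle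
  have hmono : Real.log (S/((d:ℝ)+1)) ≤ Real.log ((κ+1)/((d:ℝ)+1)) :=
    Real.log_le_log (by positivity) hfrac
  have h6 : Real.log ((κ+1)/((d:ℝ)+1)) = - Real.log (((d:ℝ)+1)/(κ+1)) := by
    rw [← Real.log_inv, inv_div]
  have hfinal : Real.log (((d:ℝ)+1)/(κ+1)) ≤ -(L/((d:ℝ)+1)) := by
    have := hjensen.trans hmono
    rw [h6] at this
    linarith
  have hgs : ∑ b, (-∑ n, p b n * Real.logb 2 (p b n))
      = -(L / Real.log 2) := by
    have e1 : ∀ b, (-∑ n, p b n * Real.logb 2 (p b n))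
        = -((∑ n, p b n * Real.log (p b n)) / Real.log 2) := by
      intro b
      congr 1
      rw [Finset.sum_div]
      exact Finset.sum_congr rfl fun n _ => by rw [Real.logb]; ring
    simp_rw [e1]
    rw [hLdef, Fintype.sum_prod_type, Finset.sum_neg_distrib, ← Finset.sum_div]
  rw [ge_iff_le, hgs, Real.logb]
  have e2 : (1/((d:ℝ)+1)) * (-(L / Real.log 2)) = (-(L/((d:ℝ)+1))) / Real.log 2 := by
    field_simp
  rw [e2]
  exact (div_le_div_iff_of_pos_right hlog2).mpr hfinal
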